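/- Let d ≥ 1, let T ≥ 1 be an integer, let G, D > 0, set N = ⌈(log₂ T)/2⌉, η_i = 2^{−i}/(5DG) for i = 0,…,N, η^c = 1/(2GD√T), C = 1 + 1/(N+1), and priors π^c = 1/3 and π_i^s = π_i^ℓ = C/(3(i+1)(i+2)) for i = 0,…,N. Let 𝒟 ⊆ ℝ^d be a convex set of diameter at most D, and for each t ∈ {1,…,T} let x_t^c, x_t^{i,s}, x_t^{i,ℓ} ∈ 𝒟 and g_t ∈ ℝ^d with ‖g_t‖ ≤ G. Define x_t recursively as the tilted exponentially weighted average x_t = (π^c η^c W_t^c x_t^c + Σ_{i=0}^N η_i(π_i^s W_t^{i,s} x_t^{i,s} + π_i^ℓ W_t^{i,ℓ} x_t^{i,ℓ})) / (π^c η^c W_t^c + Σ_{i=0}^N η_i(π_i^s W_t^{i,s} + π_i^ℓ W_t^{i,ℓ})), where W_t^c = exp(−Σ_{τ=1}^{t−1} c_τ(x_τ^c)), W_t^{i,s} = exp(−Σ_{τ=1}^{t−1} s_τ^{η_i}(x_τ^{i,s})), W_t^{i,ℓ} = exp(−Σ_{τ=1}^{t−1} ℓ_τ^{η_i}(x_τ^{i,ℓ})).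 Then for every i ∈ {0,…,N}: Σ_{t=1}^T s_t^{η_i}(x_t) − Σ_{t=1}^T s_t^{η_i}(x_t^{i,s}) ≤ 2 ln(√3((log₂ T)/2 + 3)) and Σ_{t=1}^T ℓ_t^{η_i}(x_t) − Σ_{t=1}^T ℓ_t^{η_i}(x_t^{i,ℓ}) ≤ 2 ln(√3((log₂ T)/2 + 3)). -/

import Mathlib

lemma maler_aux_exp (z : ℝ) (hz : |z| ≤ 1/2) : Real.exp (z - z^2) ≤ 1 + z := by
  obtain ⟨h1, h2⟩ := abs_le.mp hz
  have hx : |z - z^2| ≤ 1 := by rw [abs_le]; constructor <;> nlinarith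
  have hb := Real.exp_bound hx (n := 4) (by norm_num)
  rw [abs_le] at hb
  have hb1 := hb.2
  have hpow : |z - z^2| ^ 4 = (z - z^2)^4 := by
    rw [← abs_pow, abs_of_nonneg (by positivity)]
  rw [hpow] at hb1
  simp [Finset.sum_range_succ, Nat.factorial] at hb1
  nlinarith [sq_nonneg z, sq_nonneg (z - z^2), sq_nonneg (z + z^2), sq_nonneg (1 - z),
    sq_nonneg (1 + z),
    mul_nonneg (sub_nonneg.2 h2) (sq_nonneg z),
    mul_nonneg (by linarith : (0:ℝ) ≤ z + 1/2) (sq_nonneg z),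
    mul_nonneg (mul_nonneg (by linarith : (0:ℝ) ≤ 1/2 - z) (by linarith : (0:ℝ) ≤ z + 1/2)) (sq_nonneg z),
    mul_nonneg (mul_nonneg (by linarith : (0:ℝ) ≤ 1/2 - z) (by linarith : (0:ℝ) ≤ z + 1/2)) (sq_nonneg (z*z))]

lemma maler_aux_exp' (z w : ℝ) (hz : |z| ≤ 1/2) (hw : z^2 ≤ w) :
    Real.exp (z - w) ≤ 1 + z :=
  le_trans (Real.exp_le_exp.mpr (by linarith)) (maler_aux_exp z hz)

lemma maler_sum_frac (n : ℕ) :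
    ∑ i ∈ Finset.range n, (1:ℝ)/((i+1)*(i+2)) = n/(n+1) := by
  induction n with
  | zero => simp
  | succ n ih =>
    rw [Finset.sum_range_succ, ih]
    have h1 : ((n:ℝ)+1) ≠ 0 := by positivity
    have h2 : ((n:ℝ)+2) ≠ 0 := by positivity
    push_cast
    field_simp
    ring

set_option maxHeartbeats 1000000 in
theorem maler_meta_regret_experts
    (d T : ℕ) (hd : 1 ≤ d) (hT : 1 ≤ T)
    (G D : ℝ) (hG : 0 < G) (hD : 0 < D)
    (N : ℕ) (hN : N = ⌈Real.logb 2 T / 2⌉₊)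
    (η : ℕ → ℝ) (hη : ∀ i, η i = (2 : ℝ)^(-(i : ℤ)) / (5 * D * G))
    (ηc : ℝ) (hηc : ηc = 1 / (2 * G * D * Real.sqrt T))
    (C : ℝ) (hC : C = 1 + 1 / (N + 1))
    (πc : ℝ) (hπc : πc = 1 / 3)
    (πs πl : ℕ → ℝ)
    (hπs : ∀ i, πs i = C / (3 * (i + 1) * (i + 2)))
    (hπl : ∀ i, πl i = C / (3 * (i + 1) * (i + 2)))
    (𝒟 : Set (EuclideanSpace ℝ (Fin d))) (hconv : Convex ℝ 𝒟)
    (hdiam : ∀ a ∈ 𝒟, ∀ b ∈ 𝒟, ‖a - b‖ ≤ D)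
    (xc : ℕ → EuclideanSpace ℝ (Fin d))
    (xs xl : ℕ → ℕ → EuclideanSpace ℝ (Fin d))
    (g : ℕ → EuclideanSpace ℝ (Fin d))
    (hxc : ∀ t ∈ Finset.Icc 1 T, xc t ∈ 𝒟)
    (hxs : ∀ i ≤ N, ∀ t ∈ Finset.Icc 1 T, xs i t ∈ 𝒟)
    (hxl : ∀ i ≤ N, ∀ t ∈ Finset.Icc 1 T, xl i t ∈ 𝒟)
    (hg : ∀ t ∈ Finset.Icc 1 T, ‖g t‖ ≤ G)
    (x : ℕ → EuclideanSpace ℝ (Fin d))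
    (c : ℕ → EuclideanSpace ℝ (Fin d) → ℝ)
    (hc : ∀ t y, c t y = -ηc * (inner ℝ (x t - y) (g t) : ℝ) + (ηc * G * D)^2)
    (s l : ℕ → ℕ → EuclideanSpace ℝ (Fin d) → ℝ)
    (hs : ∀ i t y, s i t y =
      -(η i) * (inner ℝ (x t - y) (g t) : ℝ) + (η i)^2 * G^2 * ‖x t - y‖^2)
    (hl : ∀ i t y, l i t y =
      -(η i) * (inner ℝ (x t - y) (g t) : ℝ) + (η i)^2 * (inner ℝ (x t - y) (g t) : ℝ)^2)
    (Wc : ℕ → ℝ)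
    (hWc : ∀ t, Wc t = Real.exp (-(∑ τ ∈ Finset.Icc 1 (t - 1), c τ (xc τ))))
    (Ws Wl : ℕ → ℕ → ℝ)
    (hWs : ∀ i t, Ws i t = Real.exp (-(∑ τ ∈ Finset.Icc 1 (t - 1), s i τ (xs i τ))))
    (hWl : ∀ i t, Wl i t = Real.exp (-(∑ τ ∈ Finset.Icc 1 (t - 1), l i τ (xl i τ))))
    (hx : ∀ t ∈ Finset.Icc 1 T, x t =
      (πc * ηc * Wc t +
        ∑ i ∈ Finset.range (N + 1), η i * (πs i * Ws i t + πl i * Wl i t))⁻¹ •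
      ((πc * ηc * Wc t) • xc t +
        ∑ i ∈ Finset.range (N + 1),
          ((πs i * η i * Ws i t) • xs i t + (πl i * η i * Wl i t) • xl i t))) :
    ∀ i ≤ N,
      (∑ t ∈ Finset.Icc 1 T, s i t (x t)) - (∑ t ∈ Finset.Icc 1 T, s i t (xs i t))
        ≤ 2 * Real.log (Real.sqrt 3 * (Real.logb 2 T / 2 + 3)) ∧
      (∑ t ∈ Finset.Icc 1 T, l i t (x t)) - (∑ t ∈ Finset.Icc 1 T, l i t (xl i t))
        ≤ 2 * Real.log (Real.sqrt 3 * (Real.logb 2 T / 2 + 3)) := by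
  -- basic positivity
  have hsqT : 1 ≤ Real.sqrt T := Real.one_le_sqrt.mpr (by exact_mod_cast hT)
  have hηc_pos : 0 < ηc := by rw [hηc]; positivity
  have hη_pos : ∀ i, 0 < η i := fun i => by rw [hη]; positivity
  have hη_le : ∀ i, η i * (D * G) ≤ 1/5 := by
    intro i
    rw [hη]
    have h2 : (2:ℝ)^(-(i:ℤ)) ≤ 1 := zpow_le_one_of_nonpos₀ one_le_two (by simp)
    have h2' : (0:ℝ) < (2:ℝ)^(-(i:ℤ)) := by positivity
    rw [div_mul_eq_mul_div, div_le_div_iff₀ (by positivity) (by norm_num)]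
    nlinarith [mul_nonneg (sub_nonneg.2 h2) (mul_pos hD hG).le]
  have hsT : 0 < Real.sqrt T := lt_of_lt_of_le one_pos hsqT
  have hηcDG : ηc * (D * G) ≤ 1/2 := by
    rw [hηc]
    rw [div_mul_eq_mul_div, div_le_div_iff₀ (by positivity) (by norm_num)]
    nlinarith [mul_nonneg (sub_nonneg.2 hsqT) (mul_pos hD hG).le]
  have hC1 : 1 ≤ C := by
    rw [hC]; have : (0:ℝ) < 1/(N+1) := by positivity
    linarith
  have hCpos : 0 < C := lt_of_lt_of_le one_pos hC1
  have hπs_pos : ∀ i, 0 < πs i := fun i => by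
    rw [hπs]; positivity
  have hπl_pos : ∀ i, 0 < πl i := fun i => by
    rw [hπl]; positivity
  have hπc_pos : 0 < πc := by rw [hπc]; norm_num
  have hWc_pos : ∀ t, 0 < Wc t := fun t => by rw [hWc]; exact Real.exp_pos _
  have hWs_pos : ∀ i t, 0 < Ws i t := fun i t => by rw [hWs]; exact Real.exp_pos _
  have hWl_pos : ∀ i t, 0 < Wl i t := fun i t => by rw [hWl]; exact Real.exp_pos _
  -- total tilted mass
  set S : ℕ → ℝ := fun t => πc * ηc * Wc t +
      ∑ i ∈ Finset.range (N + 1), η i * (πs i * Ws i t + πl i * Wl i t) with hS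
  have hS_pos : ∀ t, 0 < S t := by
    intro t
    have h1 : 0 < πc * ηc * Wc t := by
      have := hWc_pos t; positivity
    have h2 : 0 ≤ ∑ i ∈ Finset.range (N + 1), η i * (πs i * Ws i t + πl i * Wl i t) := by
      apply Finset.sum_nonneg
      intro i _
      have := hη_pos i; have := hπs_pos i; have := hπl_pos i
      have := hWs_pos i t; have := hWl_pos i t
      positivity
    simp only [hS]; linarith
  -- membership of x t in 𝒟
  have hmem : ∀ t ∈ Finset.Icc 1 T, x t ∈ 𝒟 := by
    intro t ht
    have hxt := hx t ht
    set μ : ℕ → ℝ := fun i => πs i * η i * Ws i t + πl i * Wl i t * η i with hμ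
    have hμ_pos : ∀ i, 0 < μ i := by
      intro i
      have := hη_pos i; have := hπs_pos i; have := hπl_pos i
      have := hWs_pos i t; have := hWl_pos i t
      simp only [hμ]; positivity
    set y : ℕ → EuclideanSpace ℝ (Fin d) := fun i =>
      (μ i)⁻¹ • ((πs i * η i * Ws i t) • xs i t + (πl i * η i * Wl i t) • xl i t) with hy
    have hy_mem : ∀ i ≤ N, y i ∈ 𝒟 := by
      intro i hi
      have h1 : y i = (πs i * η i * Ws i t / μ i) • xs i t
          + (πl i * η i * Wl i t / μ i) • xl i t := by
        simp only [hy, smul_add, smul_smul]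
        rw [div_eq_inv_mul, div_eq_inv_mul]
      rw [h1]
      have hp1 := hπs_pos i; have hp2 := hπl_pos i
      have hp3 := hη_pos i; have hp4 := hWs_pos i t; have hp5 := hWl_pos i t
      have hp6 := hμ_pos i
      apply hconv (hxs i hi t ht) (hxl i hi t ht)
      · positivity
      · positivity
      · rw [← add_div, div_eq_one_iff_eq (ne_of_gt hp6)]
        simp only [hμ]
        ring
    set w : ℕ → ℝ := fun k => if k = 0 then πc * ηc * Wc t else μ (k - 1) with hw
    set p : ℕ → EuclideanSpace ℝ (Fin d) := fun k => if k = 0 then xc t else y (k - 1) with hp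
    have hsum_w : ∑ k ∈ Finset.range (N + 2), w k = S t := by
      rw [Finset.sum_range_succ' w (N+1)]
      simp only [hw, hS]
      simp only [Nat.succ_ne_zero, if_false, if_true, Nat.add_sub_cancel, hμ]
      rw [add_comm]
      congr 1
      apply Finset.sum_congr rfl
      intro i _
      ring
    have hsum_p : ∑ k ∈ Finset.range (N + 2), w k • p k =
        (πc * ηc * Wc t) • xc t +
        ∑ i ∈ Finset.range (N + 1),
          ((πs i * η i * Ws i t) • xs i t + (πl i * η i * Wl i t) • xl i t) := by
      rw [Finset.sum_range_succ' (fun k => w k • p k) (N+1)]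
      simp only [hw, hp, Nat.succ_ne_zero, if_false, if_true, Nat.add_sub_cancel]
      rw [add_comm]
      congr 1
      apply Finset.sum_congr rfl
      intro i _
      simp only [hy]
      rw [smul_inv_smul₀ (ne_of_gt (hμ_pos i))]
    have hxcm : x t = (Finset.range (N + 2)).centerMass w p := by
      rw [Finset.centerMass, hsum_w, hsum_p, hxt]
    rw [hxcm]
    apply hconv.centerMass_mem
    · intro k _
      simp only [hw]
      split
      · have := hWc_pos t; positivity
      · exact le_of_lt (hμ_pos _)
    · rw [hsum_w]; exact hS_pos t
    · intro k hk
      simp only [hp]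
      split
      · exact hxc t ht
      · rename_i hk0
        apply hy_mem
        have : k < N + 2 := Finset.mem_range.mp hk
        omega
  -- diameter/gradient bounds
  have hib : ∀ t ∈ Finset.Icc 1 T, ∀ y ∈ 𝒟, |(inner ℝ (x t - y) (g t) : ℝ)| ≤ D * G := by
    intro t ht y hy
    have h1 : |(inner ℝ (x t - y) (g t) : ℝ)| ≤ ‖x t - y‖ * ‖g t‖ :=
      abs_real_inner_le_norm _ _
    have h2 : ‖x t - y‖ ≤ D := hdiam _ (hmem t ht) _ hy
    have h3 : ‖g t‖ ≤ G := hg t ht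
    exact h1.trans (mul_le_mul h2 h3 (norm_nonneg _) hD.le)
  -- potential
  set Φ : ℕ → ℝ := fun t => πc * Wc t +
      ∑ i ∈ Finset.range (N + 1), (πs i * Ws i t + πl i * Wl i t) with hΦ
  -- step inequality
  have hib2 : ∀ t ∈ Finset.Icc 1 T, ∀ y : EuclideanSpace ℝ (Fin d),
      |(inner ℝ (x t - y) (g t) : ℝ)| ≤ ‖x t - y‖ * G := by
    intro t ht y
    refine (abs_real_inner_le_norm _ _).trans ?_
    exact mul_le_mul_of_nonneg_left (hg t ht) (norm_nonneg _)
  have hstep : ∀ n : ℕ, n + 1 ≤ T → Φ (n + 2) ≤ Φ (n + 1) := by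
    intro n hn
    have ht : (n+1) ∈ Finset.Icc 1 T := by
      rw [Finset.mem_Icc]; omega
    -- weight recursions
    have hWcr : Wc (n+2) = Wc (n+1) * Real.exp (-(c (n+1) (xc (n+1)))) := by
      rw [hWc (n+2), hWc (n+1)]
      simp only [show n+2-1 = n+1 from rfl, show n+1-1 = n from rfl]
      rw [Finset.sum_Icc_succ_top (by omega : 1 ≤ n+1), neg_add, Real.exp_add]
    have hWsr : ∀ i, Ws i (n+2) = Ws i (n+1) * Real.exp (-(s i (n+1) (xs i (n+1)))) := by
      intro i
      rw [hWs i (n+2), hWs i (n+1)]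
      simp only [show n+2-1 = n+1 from rfl, show n+1-1 = n from rfl]
      rw [Finset.sum_Icc_succ_top (by omega : 1 ≤ n+1), neg_add, Real.exp_add]
    have hWlr : ∀ i, Wl i (n+2) = Wl i (n+1) * Real.exp (-(l i (n+1) (xl i (n+1)))) := by
      intro i
      rw [hWl i (n+2), hWl i (n+1)]
      simp only [show n+2-1 = n+1 from rfl, show n+1-1 = n from rfl]
      rw [Finset.sum_Icc_succ_top (by omega : 1 ≤ n+1), neg_add, Real.exp_add]
    -- per-expert exponential bounds
    have hXc : Real.exp (-(c (n+1) (xc (n+1)))) ≤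
        1 + ηc * (inner ℝ (x (n+1) - xc (n+1)) (g (n+1)) : ℝ) := by
      rw [hc]
      set a : ℝ := (inner ℝ (x (n+1) - xc (n+1)) (g (n+1)) : ℝ) with ha
      have hA : |a| ≤ D * G := hib (n+1) ht (xc (n+1)) (hxc (n+1) ht)
      rw [show -(-ηc * a + (ηc*G*D)^2) = ηc * a - (ηc*G*D)^2 by ring]
      apply maler_aux_exp'
      · rw [abs_mul, abs_of_pos hηc_pos]
        calc ηc * |a| ≤ ηc * (D*G) := mul_le_mul_of_nonneg_left hA hηc_pos.le
          _ ≤ 1/2 := hηcDG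
      · nlinarith [mul_self_le_mul_self (abs_nonneg a) hA, sq_abs a, sq_nonneg ηc,
          abs_nonneg a]
    have hXs : ∀ i ∈ Finset.range (N+1), Real.exp (-(s i (n+1) (xs i (n+1)))) ≤
        1 + η i * (inner ℝ (x (n+1) - xs i (n+1)) (g (n+1)) : ℝ) := by
      intro i hik
      have hiN : i ≤ N := by have := Finset.mem_range.mp hik; omega
      rw [hs]
      set a : ℝ := (inner ℝ (x (n+1) - xs i (n+1)) (g (n+1)) : ℝ) with ha
      have hA : |a| ≤ D * G := hib (n+1) ht (xs i (n+1)) (hxs i hiN (n+1) ht)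
      have hA2 : |a| ≤ ‖x (n+1) - xs i (n+1)‖ * G := hib2 (n+1) ht (xs i (n+1))
      rw [show -(-η i * a + (η i)^2 * G^2 * ‖x (n+1) - xs i (n+1)‖^2)
          = η i * a - (η i)^2 * G^2 * ‖x (n+1) - xs i (n+1)‖^2 by ring]
      apply maler_aux_exp'
      · rw [abs_mul, abs_of_pos (hη_pos i)]
        calc η i * |a| ≤ η i * (D*G) := mul_le_mul_of_nonneg_left hA (hη_pos i).le
          _ ≤ 1/5 := hη_le i
          _ ≤ 1/2 := by norm_num
      · nlinarith [mul_self_le_mul_self (abs_nonneg a) hA2, sq_abs a,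
          sq_nonneg (η i), abs_nonneg a, norm_nonneg (x (n+1) - xs i (n+1)), hG.le]
    have hXl : ∀ i ∈ Finset.range (N+1), Real.exp (-(l i (n+1) (xl i (n+1)))) ≤
        1 + η i * (inner ℝ (x (n+1) - xl i (n+1)) (g (n+1)) : ℝ) := by
      intro i hik
      have hiN : i ≤ N := by have := Finset.mem_range.mp hik; omega
      rw [hl]
      set a : ℝ := (inner ℝ (x (n+1) - xl i (n+1)) (g (n+1)) : ℝ) with ha
      have hA : |a| ≤ D * G := hib (n+1) ht (xl i (n+1)) (hxl i hiN (n+1) ht)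
      rw [show -(-η i * a + (η i)^2 * a^2) = η i * a - (η i)^2 * a^2 by ring]
      apply maler_aux_exp'
      · rw [abs_mul, abs_of_pos (hη_pos i)]
        calc η i * |a| ≤ η i * (D*G) := mul_le_mul_of_nonneg_left hA (hη_pos i).le
          _ ≤ 1/5 := hη_le i
          _ ≤ 1/2 := by norm_num
      · exact le_of_eq (by ring)
    -- the tilted average kills the linear term
    have hnum : (S (n+1)) • x (n+1) =
        (πc * ηc * Wc (n+1)) • xc (n+1) +
        ∑ i ∈ Finset.range (N + 1),
          ((πs i * η i * Ws i (n+1)) • xs i (n+1) + (πl i * η i * Wl i (n+1)) • xl i (n+1)) := by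
      rw [hx (n+1) ht]
      simp only [hS]
      rw [smul_inv_smul₀]
      exact ne_of_gt (hS_pos (n+1))
    have hinner : S (n+1) * (inner ℝ (x (n+1)) (g (n+1)) : ℝ) =
        πc * ηc * Wc (n+1) * (inner ℝ (xc (n+1)) (g (n+1)) : ℝ) +
        ∑ i ∈ Finset.range (N + 1),
          (πs i * η i * Ws i (n+1) * (inner ℝ (xs i (n+1)) (g (n+1)) : ℝ) +
           πl i * η i * Wl i (n+1) * (inner ℝ (xl i (n+1)) (g (n+1)) : ℝ)) := by
      have h := congrArg (fun v : EuclideanSpace ℝ (Fin d) => (inner ℝ v (g (n+1)) : ℝ)) hnum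
      simpa only [real_inner_smul_left, inner_add_left, sum_inner] using h
    have hzero : πc * ηc * Wc (n+1) * (inner ℝ (x (n+1) - xc (n+1)) (g (n+1)) : ℝ) +
        ∑ i ∈ Finset.range (N + 1),
          (η i * (πs i * Ws i (n+1) * (inner ℝ (x (n+1) - xs i (n+1)) (g (n+1)) : ℝ)) +
           η i * (πl i * Wl i (n+1) * (inner ℝ (x (n+1) - xl i (n+1)) (g (n+1)) : ℝ))) = 0 := by
      simp only [inner_sub_left]
      have hsplit : ∀ i ∈ Finset.range (N+1),
          (η i * (πs i * Ws i (n+1) * ((inner ℝ (x (n+1)) (g (n+1)) : ℝ) - (inner ℝ (xs i (n+1)) (g (n+1)) : ℝ))) +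
           η i * (πl i * Wl i (n+1) * ((inner ℝ (x (n+1)) (g (n+1)) : ℝ) - (inner ℝ (xl i (n+1)) (g (n+1)) : ℝ))))
          = η i * (πs i * Ws i (n+1) + πl i * Wl i (n+1)) * (inner ℝ (x (n+1)) (g (n+1)) : ℝ)
            - (πs i * η i * Ws i (n+1) * (inner ℝ (xs i (n+1)) (g (n+1)) : ℝ) +
               πl i * η i * Wl i (n+1) * (inner ℝ (xl i (n+1)) (g (n+1)) : ℝ)) := by
        intro i _; ring
      rw [Finset.sum_congr rfl hsplit, Finset.sum_sub_distrib, ← Finset.sum_mul]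
      have hSu : S (n+1) = πc * ηc * Wc (n+1) +
          ∑ i ∈ Finset.range (N + 1), η i * (πs i * Ws i (n+1) + πl i * Wl i (n+1)) := by
        simp only [hS]
      rw [hSu] at hinner
      linarith [hinner]
    -- assemble
    have hΦ2 : Φ (n+2) = πc * Wc (n+1) * Real.exp (-(c (n+1) (xc (n+1)))) +
        ∑ i ∈ Finset.range (N + 1),
          (πs i * Ws i (n+1) * Real.exp (-(s i (n+1) (xs i (n+1)))) +
           πl i * Wl i (n+1) * Real.exp (-(l i (n+1) (xl i (n+1))))) := by
      simp only [hΦ, hWcr]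
      rw [← mul_assoc]
      congr 1
      apply Finset.sum_congr rfl
      intro i _
      rw [hWsr i, hWlr i, ← mul_assoc, ← mul_assoc]
    have hmid : Φ (n+2) ≤ πc * Wc (n+1) * (1 + ηc * (inner ℝ (x (n+1) - xc (n+1)) (g (n+1)) : ℝ)) +
        ∑ i ∈ Finset.range (N + 1),
          (πs i * Ws i (n+1) * (1 + η i * (inner ℝ (x (n+1) - xs i (n+1)) (g (n+1)) : ℝ)) +
           πl i * Wl i (n+1) * (1 + η i * (inner ℝ (x (n+1) - xl i (n+1)) (g (n+1)) : ℝ))) := by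
      rw [hΦ2]
      apply add_le_add
      · apply mul_le_mul_of_nonneg_left hXc
        exact (mul_pos hπc_pos (hWc_pos (n+1))).le
      · apply Finset.sum_le_sum
        intro i hik
        apply add_le_add
        · apply mul_le_mul_of_nonneg_left (hXs i hik)
          exact (mul_pos (hπs_pos i) (hWs_pos i (n+1))).le
        · apply mul_le_mul_of_nonneg_left (hXl i hik)
          exact (mul_pos (hπl_pos i) (hWl_pos i (n+1))).le
    refine hmid.trans (le_of_eq ?_)
    have hsplit2 : ∀ i ∈ Finset.range (N+1),
        (πs i * Ws i (n+1) * (1 + η i * (inner ℝ (x (n+1) - xs i (n+1)) (g (n+1)) : ℝ)) +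
         πl i * Wl i (n+1) * (1 + η i * (inner ℝ (x (n+1) - xl i (n+1)) (g (n+1)) : ℝ)))
        = (πs i * Ws i (n+1) + πl i * Wl i (n+1)) +
          (η i * (πs i * Ws i (n+1) * (inner ℝ (x (n+1) - xs i (n+1)) (g (n+1)) : ℝ)) +
           η i * (πl i * Wl i (n+1) * (inner ℝ (x (n+1) - xl i (n+1)) (g (n+1)) : ℝ))) := by
      intro i _; ring
    rw [Finset.sum_congr rfl hsplit2, Finset.sum_add_distrib]
    simp only [hΦ]
    linarith [hzero]
  -- initial potential
  have hΦ1 : Φ 1 = 1 := by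
    have hWc1 : Wc 1 = 1 := by rw [hWc]; simp
    have hWs1 : ∀ i, Ws i 1 = 1 := fun i => by rw [hWs]; simp
    have hWl1 : ∀ i, Wl i 1 = 1 := fun i => by rw [hWl]; simp
    simp only [hΦ, hWc1, hWs1, hWl1, mul_one]
    have : ∀ i ∈ Finset.range (N+1), πs i + πl i = (2*C/3) * (1/((i+1)*(i+2))) := by
      intro i _
      rw [hπs, hπl]
      have h1 : ((i:ℝ)+1) ≠ 0 := by positivity
      have h2 : ((i:ℝ)+2) ≠ 0 := by positivity
      field_simp
      ring
    rw [Finset.sum_congr rfl this, ← Finset.mul_sum, maler_sum_frac (N+1)]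
    rw [hπc, hC]
    have h1 : ((N:ℝ)+1) ≠ 0 := by positivity
    push_cast
    field_simp
    ring
  -- potential bounded by 1
  have hΦT : Φ (T + 1) ≤ 1 := by
    have key : ∀ n : ℕ, n ≤ T → Φ (n + 1) ≤ 1 := by
      intro n
      induction n with
      | zero => intro _; rw [hΦ1]
      | succ m ih =>
        intro hm
        have h1 : Φ (m + 2) ≤ Φ (m + 1) := hstep m hm
        have h2 : Φ (m + 1) ≤ 1 := ih (by omega)
        linarith
    exact key T le_rfl
  -- finish
  intro i hi
  -- each weight is at most 1
  have hterm : πs i * Ws i (T+1) ≤ 1 ∧ πl i * Wl i (T+1) ≤ 1 := by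
    have hmem' : i ∈ Finset.range (N+1) := Finset.mem_range.mpr (by omega)
    have hnn : ∀ j ∈ Finset.range (N+1),
        (0:ℝ) ≤ πs j * Ws j (T+1) + πl j * Wl j (T+1) := by
      intro j _
      have := hπs_pos j; have := hπl_pos j
      have := hWs_pos j (T+1); have := hWl_pos j (T+1)
      positivity
    have h1 : πs i * Ws i (T+1) + πl i * Wl i (T+1) ≤
        ∑ j ∈ Finset.range (N+1), (πs j * Ws j (T+1) + πl j * Wl j (T+1)) :=
      Finset.single_le_sum hnn hmem'
    have h2 : 0 < πc * Wc (T+1) := by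
      have := hWc_pos (T+1); positivity
    have h3 : 0 < πl i * Wl i (T+1) := by
      have := hπl_pos i; have := hWl_pos i (T+1); positivity
    have h4 : 0 < πs i * Ws i (T+1) := by
      have := hπs_pos i; have := hWs_pos i (T+1); positivity
    have h5 := hΦT
    simp only [hΦ] at h5
    constructor <;> linarith
  -- log bound
  have hlogbound : Real.log (3 * ((i:ℝ)+1) * ((i:ℝ)+2) / C) ≤
      2 * Real.log (Real.sqrt 3 * (Real.logb 2 T / 2 + 3)) := by
    have hL : 0 ≤ Real.logb 2 T :=
      Real.logb_nonneg one_lt_two (by exact_mod_cast hT)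
    have hNle : (N:ℝ) ≤ Real.logb 2 T / 2 + 1 := by
      rw [hN]
      have := Nat.ceil_lt_add_one (by linarith : (0:ℝ) ≤ Real.logb 2 T / 2)
      linarith
    have hile : (i:ℝ) ≤ (N:ℝ) := by exact_mod_cast hi
    set L := Real.logb 2 T with hLdef
    have h0 : (0:ℝ) < 3 * ((i:ℝ)+1) * ((i:ℝ)+2) / C := by positivity
    have hsq3 : Real.sqrt 3 ^ 2 = 3 := Real.sq_sqrt (by norm_num)
    have h2 : Real.sqrt 3 * (L / 2 + 3) > 0 :=
      mul_pos (Real.sqrt_pos.mpr (by norm_num)) (by linarith)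
    rw [show 2 * Real.log (Real.sqrt 3 * (L / 2 + 3)) =
        Real.log ((Real.sqrt 3 * (L / 2 + 3))^2) by
      rw [Real.log_pow]; push_cast; ring]
    apply Real.log_le_log h0
    have hexp : (Real.sqrt 3 * (L / 2 + 3))^2 = 3 * (L/2+3)^2 := by
      rw [mul_pow, hsq3]
    rw [hexp]
    have step1 : 3 * ((i:ℝ)+1) * ((i:ℝ)+2) / C ≤ 3 * ((i:ℝ)+1) * ((i:ℝ)+2) := by
      rw [div_le_iff₀ hCpos]
      nlinarith [mul_le_mul_of_nonneg_left hC1 (by positivity : (0:ℝ) ≤ 3*((i:ℝ)+1)*((i:ℝ)+2))]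
    have step2 : 3 * ((i:ℝ)+1) * ((i:ℝ)+2) ≤ 3 * (L/2+3)^2 := by
      have hi1 : (i:ℝ) + 1 ≤ L/2 + 3 := by linarith
      have hi2 : (i:ℝ) + 2 ≤ L/2 + 3 := by linarith
      nlinarith
    linarith
  -- surrogate loss at x t is zero
  have hszero : ∀ t, s i t (x t) = 0 := by
    intro t
    rw [hs]
    simp
  have hlzero : ∀ t, l i t (x t) = 0 := by
    intro t
    rw [hl]
    simp
  have hsum_s_zero : (∑ t ∈ Finset.Icc 1 T, s i t (x t)) = 0 :=
    Finset.sum_eq_zero fun t _ => hszero t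
  have hsum_l_zero : (∑ t ∈ Finset.Icc 1 T, l i t (x t)) = 0 :=
    Finset.sum_eq_zero fun t _ => hlzero t
  have hfin : ∀ (A : ℝ), πs i * Real.exp (-A) ≤ 1 →
      -A ≤ Real.log (3 * ((i:ℝ)+1) * ((i:ℝ)+2) / C) := by
    intro A hA
    have hπ : πs i = C / (3 * ((i:ℝ)+1) * ((i:ℝ)+2)) := hπs i
    have h0 : (0:ℝ) < 3 * ((i:ℝ)+1) * ((i:ℝ)+2) / C := by positivity
    rw [Real.le_log_iff_exp_le h0]
    rw [hπ] at hA
    rw [div_mul_eq_mul_div, div_le_one (by positivity)] at hA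
    rw [le_div_iff₀ hCpos]
    linarith
  constructor
  · rw [hsum_s_zero]
    have h1 := hterm.1
    rw [hWs i (T+1)] at h1
    simp only [Nat.add_sub_cancel] at h1
    have := hfin _ h1
    linarith
  · rw [hsum_l_zero]
    have h1 := hterm.2
    have hπll : πl i = πs i := by rw [hπl, hπs]
    rw [hWl i (T+1), hπll] at h1
    simp only [Nat.add_sub_cancel] at h1
    have := hfin _ h1
    linarith
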